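/- For any subset J ⊆ Π, the set {X_w : w ∈ W^J} is a graded cellular basis of the invariant algebra C^J := C^{W_J} (with respect to the identity anti-involution, the poset W^J ordered by length, and one-element cells), which makes C^J a graded cellular algebra in the sense of Hu–Mathas; moreover every cell module of C^J is one-dimensional. -/

import Mathlib

/-!
STATEMENT 10: For any subset J ⊆ Π, the set {X_w : w ∈ W^J} is a graded cellular basis of
the invariant algebra C^J := C^{W_J} (with respect to the identity anti-involution, the
poset W^J ordered by length, and one-element cells), which makes C^J a graded cellular
algebra in the sense of Hu–Mathas; moreover every cell module of C^J is one-dimensional.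

Modelling conventions:
* The Weyl group `W` is modelled by a Coxeter system `cs : CoxeterSystem cm W` (indexed by
  the set `B` of simple roots Π); `w0` is the longest element; for `J ⊆ Π`, `W_J` is the
  standard parabolic subgroup and `W^J` the set of minimal length left coset
  representatives.
* The coinvariant algebra `C` is modelled as a graded commutative ℂ-algebra with grading
  `𝒜` and Schubert basis `X : Basis W ℂ C` with `X w ∈ 𝒜 (2ℓ(w))`.  The group `W` acts on
  `C` by graded ℂ-algebra automorphisms, and `CJ = C^{W_J}` is the subalgebra of
  `W_J`-invariants; by Lemma cj1, `{X_w : w ∈ W^J}` is a ℂ-basis of `CJ` (hypothesis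
  `hCJspan` together with `hXmem`).
* Since all cells are singletons and `C` is commutative (so the identity is an algebra
  anti-involution), the Hu–Mathas graded cellular axioms for the basis
  `{X_w : w ∈ W^J}`, with poset `W^J` ordered by length, amount exactly to:
  (i) each basis element `X_w` (`w ∈ W^J`) is homogeneous of degree `2ℓ(w)` (the degree
      function of the graded cell datum), and
  (ii) for every `a ∈ C^J` and `w ∈ W^J` there is a *scalar* `r ∈ ℂ` (independence of the
      scalar from any tableau data is automatic, as cells are singletons; this also says
      each cell module is one-dimensional, with `a` acting by `r`) such that
      `a · X_w ≡ r · X_w` modulo the span of the higher-length basis elements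
      `{X_y : y ∈ W^J, ℓ(y) > ℓ(w)}`.
  The conclusion below states exactly (i) and (ii), together with linear independence and
  spanning, i.e. that `{X_w : w ∈ W^J}` is a basis of `C^J`.
-/

open CoxeterSystem

/-- `w` is a minimal length representative of its left coset `w * WJ`. -/
def IsMinLeftCosetRep {B W : Type*} [Group W] {cm : CoxeterMatrix B}
    (cs : CoxeterSystem cm W) (WJ : Subgroup W) (w : W) : Prop :=
  ∀ u ∈ WJ, cs.length w ≤ cs.length (w * u)

theorem invariant_coinvariant_algebra_graded_cellular
    {B W : Type*} [Group W] [Fintype W] {cm : CoxeterMatrix B} (cs : CoxeterSystem cm W)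
    (w0 : W) (hw0 : ∀ w, cs.length w ≤ cs.length w0)
    -- the coinvariant algebra C with its grading and W-action
    (C : Type*) [CommRing C] [Algebra ℂ C]
    (𝒜 : ℕ → Submodule ℂ C) [GradedAlgebra 𝒜]
    [MulSemiringAction W C] [SMulCommClass W ℂ C]
    (hactdeg : ∀ (g : W) (n : ℕ), ∀ c ∈ 𝒜 n, g • c ∈ 𝒜 n)
    -- the Schubert basis of C
    (X : Module.Basis W ℂ C)
    (hdeg : ∀ w, X w ∈ 𝒜 (2 * cs.length w))
    -- the parabolic subgroup W_J and the invariant algebra C^J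
    (J : Set B) (WJ : Subgroup W) (hWJ : WJ = Subgroup.closure (cs.simple '' J))
    (CJ : Subalgebra ℂ C) (hCJ : ∀ c : C, c ∈ CJ ↔ ∀ g ∈ WJ, g • c = c)
    -- Lemma cj1: X_w ∈ C^J for w ∈ W^J, and these elements span C^J
    (hXmem : ∀ w, IsMinLeftCosetRep cs WJ w → X w ∈ CJ)
    (hCJspan : ∀ c ∈ CJ,
      c ∈ Submodule.span ℂ ((fun w => X w) '' {w | IsMinLeftCosetRep cs WJ w})) :
    -- `{X_w : w ∈ W^J}` is a ℂ-basis of C^J ...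
    (LinearIndependent ℂ fun w : {w : W // IsMinLeftCosetRep cs WJ w} => X (w : W)) ∧
    (∀ c ∈ CJ,
      c ∈ Submodule.span ℂ ((fun w => X w) '' {w | IsMinLeftCosetRep cs WJ w})) ∧
    -- ... consisting of homogeneous elements, X_w of degree 2ℓ(w) ...
    (∀ w, IsMinLeftCosetRep cs WJ w → X w ∈ 𝒜 (2 * cs.length w)) ∧
    -- ... which is cellular (poset W^J ordered by length, singleton cells, identity
    -- anti-involution): multiplication is triangular with one-dimensional cell modules
    (∀ a ∈ CJ, ∀ w, IsMinLeftCosetRep cs WJ w →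
      ∃ r : ℂ, a * X w - r • X w ∈ Submodule.span ℂ
        ((fun y => X y) ''
          {y | IsMinLeftCosetRep cs WJ y ∧ cs.length w < cs.length y})) := by

  classical
  have coord_proj : ∀ (m : ℕ) (y : W) (c : C),
      X.repr (GradedAlgebra.proj 𝒜 m c) y = if 2 * cs.length y = m then X.repr c y else 0 := by
    intro m y c
    have h : (X.coord y).comp (GradedAlgebra.proj 𝒜 m) =
        (if 2 * cs.length y = m then X.coord y else (0 : C →ₗ[ℂ] ℂ)) := by
      apply Module.Basis.ext X
      intro z
      simp only [LinearMap.comp_apply, GradedAlgebra.proj_apply, Module.Basis.coord_apply]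
      by_cases hz : 2 * cs.length z = m
      · rw [DirectSum.decompose_of_mem_same 𝒜 (hz ▸ hdeg z)]
        by_cases hy : 2 * cs.length y = m
        · simp [hy, Module.Basis.coord_apply]
        · have hyz : z ≠ y := fun h => hy (h ▸ hz)
          simp [hy, Module.Basis.repr_self_apply, hyz]
      · rw [DirectSum.decompose_of_mem_ne 𝒜 (hdeg z) hz]
        by_cases hy : 2 * cs.length y = m
        · have hyz : z ≠ y := fun h => hz (h ▸ hy)
          simp [hy, Module.Basis.coord_apply, Module.Basis.repr_self_apply, hyz]
        · simp [hy]
    have := congrArg (fun f : C →ₗ[ℂ] ℂ => f c) h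
    simp only [LinearMap.comp_apply, Module.Basis.coord_apply] at this
    rw [this]
    by_cases hy : 2 * cs.length y = m
    · simp [hy, Module.Basis.coord_apply]
    · simp [hy]
  have h0 : ∀ c ∈ 𝒜 0, ∃ t : ℂ, c = t • X 1 := by
    intro c hc
    have hsupp : ↑(X.repr c).support ⊆ ({1} : Set W) := by
      intro y hy
      have hne : X.repr c y ≠ 0 := Finsupp.mem_support_iff.1 hy
      have := coord_proj 0 y c
      rw [GradedAlgebra.proj_apply, DirectSum.decompose_of_mem_same 𝒜 hc] at this
      by_cases hly : 2 * cs.length y = 0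
      · have : cs.length y = 0 := by omega
        have : y = 1 := cs.length_eq_zero_iff.1 this
        simp [this]
      · simp [hly] at this
        exact absurd this hne
    have : c ∈ Submodule.span ℂ (X '' ({1} : Set W)) := X.mem_span_image.2 hsupp
    rw [Set.image_singleton, Submodule.mem_span_singleton] at this
    obtain ⟨t, ht⟩ := this
    exact ⟨t, ht.symm⟩
  refine ⟨X.linearIndependent.comp _ Subtype.val_injective, hCJspan,
    fun w _ => hdeg w, ?_⟩
  intro a ha w hw
  obtain ⟨s, hs⟩ := h0 1 (SetLike.GradedOne.one_mem (A := 𝒜))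
  by_cases hs0 : s = 0
  · have h10 : (1 : C) = 0 := by rw [hs, hs0, zero_smul]
    refine ⟨0, ?_⟩
    have : a * X w - (0 : ℂ) • X w = 0 := by
      have : a * X w = a * X w * 1 := by ring
      rw [zero_smul, sub_zero, this, h10, mul_zero]
    rw [this]
    exact Submodule.zero_mem _
  · obtain ⟨t, ht⟩ := h0 (GradedAlgebra.proj 𝒜 0 a) (by
      rw [GradedAlgebra.proj_apply]; exact ((DirectSum.decompose 𝒜 a) 0).2)
    refine ⟨t / s, ?_⟩
    set r : ℂ := t / s with hr
    set p : C := a * X w - r • X w with hp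
    have hX1 : X 1 = s⁻¹ • (1 : C) := by
      rw [hs, smul_smul, inv_mul_cancel₀ hs0, one_smul]
    have hpCJ : p ∈ CJ := by
      exact sub_mem (mul_mem ha (hXmem w hw)) (Subalgebra.smul_mem CJ (hXmem w hw) r)
    have hsuppmin : ↑(X.repr p).support ⊆ {y | IsMinLeftCosetRep cs WJ y} :=
      X.mem_span_image.1 (hCJspan p hpCJ)
    apply X.mem_span_image.2
    intro y hy
    have hne : X.repr p y ≠ 0 := Finsupp.mem_support_iff.1 hy
    have hymin : IsMinLeftCosetRep cs WJ y := hsuppmin hy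
    refine ⟨hymin, ?_⟩
    by_contra hlen
    push_neg at hlen
    -- hlen : cs.length y ≤ cs.length w
    set m := 2 * cs.length y with hm
    have hproj0 : GradedAlgebra.proj 𝒜 m p = 0 := by
      have hmap : GradedAlgebra.proj 𝒜 m p =
          GradedAlgebra.proj 𝒜 m (a * X w) - r • GradedAlgebra.proj 𝒜 m (X w) := by
        rw [hp, map_sub, map_smul]
      rcases lt_or_eq_of_le (Nat.mul_le_mul_left 2 hlen) with hlt | heq
      · -- m < 2 * length w
        have h1 : GradedAlgebra.proj 𝒜 m (a * X w) = 0 := by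
          rw [GradedAlgebra.proj_apply]
          exact DirectSum.coe_decompose_mul_of_right_mem_of_not_le 𝒜 (hdeg w)
            (by omega)
        have h2 : GradedAlgebra.proj 𝒜 m (X w) = 0 := by
          rw [GradedAlgebra.proj_apply]
          exact DirectSum.decompose_of_mem_ne 𝒜 (hdeg w) (by omega)
        rw [hmap, h1, h2, smul_zero, sub_zero]
      · -- m = 2 * length w
        have h1 : GradedAlgebra.proj 𝒜 m (a * X w) = r • X w := by
          rw [GradedAlgebra.proj_apply]
          rw [DirectSum.coe_decompose_mul_of_right_mem_of_le 𝒜 (hdeg w) heq.ge]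
          have : m - 2 * cs.length w = 0 := by omega
          rw [this]
          have : ((DirectSum.decompose 𝒜 a) 0 : C) = t • X 1 := by
            rw [← GradedAlgebra.proj_apply, ht]
          rw [this, hX1, smul_smul, smul_mul_assoc, one_mul, hr, div_eq_mul_inv,
            mul_comm t s⁻¹]
        have h2 : GradedAlgebra.proj 𝒜 m (X w) = X w := by
          rw [GradedAlgebra.proj_apply]
          exact DirectSum.decompose_of_mem_same 𝒜 (by rw [hm, heq]; exact hdeg w)
        rw [hmap, h1, h2, sub_self]
    have := coord_proj m y p
    rw [hproj0, map_zero, Finsupp.coe_zero, Pi.zero_apply] at this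
    simp only [← hm, if_pos rfl] at this
    exact hne this.symm
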